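/- Fix a vector w ∈ F_2^n of Hamming weight t ≥ 1. The number of unordered pairs {u, v} of distinct nonzero vectors of F_2^n, each of even Hamming weight, whose bitwise OR equals w (i.e., supp(u) ∪ supp(v) = supp(w)), is at most (3^t + 1)/8. -/

import Mathlib

/-- The support of a vector in `F_2^n`: the set of coordinates where it is nonzero. -/
def supp {n : ℕ} (u : Fin n → ZMod 2) : Finset (Fin n) :=
  Finset.univ.filter fun i => u i ≠ 0

namespace CountPairsAux

open Finset

lemma zmod2_ne_zero {x : ZMod 2} (h : x ≠ 0) : x = 1 := by revert x; decide

lemma zmod2_add_cancel {x y : ZMod 2} (h : x + y = 0) : y = x := by revert x y; decide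

lemma zmod2_self_add (x : ZMod 2) : x + x = 0 := by revert x; decide

variable {n : ℕ}

lemma mem_supp {u : Fin n → ZMod 2} {i : Fin n} : i ∈ supp u ↔ u i ≠ 0 := by
  simp [supp]

lemma card_supp (u : Fin n → ZMod 2) : (supp u).card = hammingNorm u := rfl

def Cset (n : ℕ) (S : Finset (Fin n)) : Finset ((Fin n → ZMod 2) × (Fin n → ZMod 2)) :=
  univ.filter fun p => (∀ i, i ∉ S → p.1 i = 0 ∧ p.2 i = 0) ∧
    ∀ i ∈ S, ¬(p.1 i = 0 ∧ p.2 i = 0)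

def Bset (n : ℕ) (S : Finset (Fin n)) : Finset ((Fin n → ZMod 2) × (Fin n → ZMod 2)) :=
  (Cset n S).filter fun p => (∑ i ∈ S, p.1 i = 0) ∧ (∑ i ∈ S, p.2 i = 0)

lemma mem_Cset {S : Finset (Fin n)} {p : (Fin n → ZMod 2) × (Fin n → ZMod 2)} :
    p ∈ Cset n S ↔ (∀ i, i ∉ S → p.1 i = 0 ∧ p.2 i = 0) ∧
      ∀ i ∈ S, ¬(p.1 i = 0 ∧ p.2 i = 0) := by
  simp [Cset]

lemma mem_Bset {S : Finset (Fin n)} {p : (Fin n → ZMod 2) × (Fin n → ZMod 2)} :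
    p ∈ Bset n S ↔ ((∀ i, i ∉ S → p.1 i = 0 ∧ p.2 i = 0) ∧
      ∀ i ∈ S, ¬(p.1 i = 0 ∧ p.2 i = 0)) ∧
      (∑ i ∈ S, p.1 i = 0) ∧ (∑ i ∈ S, p.2 i = 0) := by
  simp [Bset, mem_Cset]

lemma sum_update_of_not_mem {S : Finset (Fin n)} {a : Fin n} (ha : a ∉ S)
    (f : Fin n → ZMod 2) (c : ZMod 2) :
    ∑ i ∈ S, Function.update f a c i = ∑ i ∈ S, f i :=
  Finset.sum_congr rfl fun i hi =>
    Function.update_of_ne (by rintro rfl; exact ha hi) _ _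

lemma Cset_empty : Cset n ∅ = {(0, 0)} := by
  ext p
  rw [mem_Cset, Finset.mem_singleton]
  constructor
  · rintro ⟨h1, -⟩
    have := fun i => h1 i (Finset.notMem_empty i)
    exact Prod.ext (funext fun i => (this i).1) (funext fun i => (this i).2)
  · rintro rfl
    exact ⟨fun i _ => ⟨rfl, rfl⟩, fun i hi => absurd hi (Finset.notMem_empty i)⟩

lemma card_Cset_insert {S : Finset (Fin n)} {a : Fin n} (ha : a ∉ S) :
    (Cset n (insert a S)).card
      = ((univ.filter fun c : ZMod 2 × ZMod 2 => c ≠ 0) ×ˢ Cset n S).card := by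
  refine Finset.card_bij'
    (fun p _ => ((p.1 a, p.2 a), (Function.update p.1 a 0, Function.update p.2 a 0)))
    (fun cq _ => (Function.update cq.2.1 a cq.1.1, Function.update cq.2.2 a cq.1.2))
    ?_ ?_ ?_ ?_
  · intro p hp
    obtain ⟨h1, h2⟩ := mem_Cset.1 hp
    rw [Finset.mem_product, Finset.mem_filter]
    refine ⟨⟨Finset.mem_univ _, ?_⟩, ?_⟩
    · have := h2 a (Finset.mem_insert_self a S)
      dsimp only
      simpa [Prod.ext_iff] using this
    · rw [mem_Cset]
      dsimp only
      constructor
      · intro i hi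
        by_cases hia : i = a
        · subst hia; simp
        · rw [Function.update_of_ne hia, Function.update_of_ne hia]
          exact h1 i (by simp [hia, hi])
      · intro i hi
        have hia : i ≠ a := by rintro rfl; exact ha hi
        rw [Function.update_of_ne hia, Function.update_of_ne hia]
        exact h2 i (Finset.mem_insert_of_mem hi)
  · rintro ⟨c, q⟩ hcq
    rw [Finset.mem_product, Finset.mem_filter] at hcq
    obtain ⟨⟨-, hc⟩, hq⟩ := hcq
    obtain ⟨h1, h2⟩ := mem_Cset.1 hq
    rw [mem_Cset]
    dsimp only
    constructor
    · intro i hi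
      have hia : i ≠ a := by rintro rfl; exact hi (Finset.mem_insert_self _ S)
      have hiS : i ∉ S := fun h => hi (Finset.mem_insert_of_mem h)
      rw [Function.update_of_ne hia, Function.update_of_ne hia]
      exact h1 i hiS
    · intro i hi
      rcases Finset.mem_insert.1 hi with hia | hiS
      · subst hia; simp only [Function.update_self]
        simpa [Prod.ext_iff] using hc
      · have hia : i ≠ a := by rintro rfl; exact ha hiS
        rw [Function.update_of_ne hia, Function.update_of_ne hia]
        exact h2 i hiS
  · intro p hp
    dsimp only
    simp only [Function.update_idem, Function.update_self, Function.update_eq_self]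
  · rintro ⟨c, q⟩ hcq
    rw [Finset.mem_product, Finset.mem_filter] at hcq
    obtain ⟨-, hq⟩ := hcq
    obtain ⟨h1, -⟩ := mem_Cset.1 hq
    have hq1 : q.1 a = 0 := (h1 a ha).1
    have hq2 : q.2 a = 0 := (h1 a ha).2
    have e1 : Function.update q.1 a (0 : ZMod 2) = q.1 := by
      conv_rhs => rw [← Function.update_eq_self a q.1]
      rw [hq1]
    have e2 : Function.update q.2 a (0 : ZMod 2) = q.2 := by
      conv_rhs => rw [← Function.update_eq_self a q.2]
      rw [hq2]
    dsimp only
    simp only [Function.update_self, Function.update_idem, e1, e2]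

lemma card_Cset (S : Finset (Fin n)) : (Cset n S).card = 3 ^ S.card := by
  induction S using Finset.induction_on with
  | empty => rw [Cset_empty]; simp
  | @insert a S ha IH =>
    have hT : (univ.filter fun c : ZMod 2 × ZMod 2 => c ≠ 0).card = 3 := by decide
    rw [Finset.card_insert_of_notMem ha, card_Cset_insert ha,
      Finset.card_product, IH, hT, pow_succ, mul_comm]

lemma card_Bset_insert {S : Finset (Fin n)} {a : Fin n} (ha : a ∉ S) :
    (Bset n (insert a S)).card + (Bset n S).card = (Cset n S).card := by
  classical
  have hsplit := Finset.card_filter_add_card_filter_not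
    (s := Cset n S) (p := fun p => (∑ i ∈ S, p.1 i = 0) ∧ (∑ i ∈ S, p.2 i = 0))
  rw [show (Cset n S).filter (fun p => (∑ i ∈ S, p.1 i = 0) ∧ (∑ i ∈ S, p.2 i = 0))
      = Bset n S from rfl] at hsplit
  rw [← hsplit, add_comm ((Bset n S).card)]
  congr 1
  refine Finset.card_bij'
    (fun p _ => (Function.update p.1 a 0, Function.update p.2 a 0))
    (fun q _ => (Function.update q.1 a (∑ i ∈ S, q.1 i),
      Function.update q.2 a (∑ i ∈ S, q.2 i)))
    ?_ ?_ ?_ ?_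
  · intro p hp
    obtain ⟨⟨h1, h2⟩, hs1, hs2⟩ := mem_Bset.1 hp
    rw [Finset.sum_insert ha] at hs1 hs2
    have e1 : ∑ i ∈ S, p.1 i = p.1 a := zmod2_add_cancel hs1
    have e2 : ∑ i ∈ S, p.2 i = p.2 a := zmod2_add_cancel hs2
    rw [Finset.mem_filter]
    refine ⟨mem_Cset.2 ⟨?_, ?_⟩, ?_⟩
    · intro i hi
      dsimp only
      by_cases hia : i = a
      · subst hia; simp
      · rw [Function.update_of_ne hia, Function.update_of_ne hia]
        exact h1 i (by simp [hia, hi])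
    · intro i hi
      have hia : i ≠ a := by rintro rfl; exact ha hi
      dsimp only
      rw [Function.update_of_ne hia, Function.update_of_ne hia]
      exact h2 i (Finset.mem_insert_of_mem hi)
    · dsimp only
      rw [sum_update_of_not_mem ha, sum_update_of_not_mem ha, e1, e2]
      exact h2 a (Finset.mem_insert_self a S)
  · intro q hq
    rw [Finset.mem_filter] at hq
    obtain ⟨hqC, hqne⟩ := hq
    obtain ⟨h1, h2⟩ := mem_Cset.1 hqC
    rw [mem_Bset]
    refine ⟨⟨?_, ?_⟩, ?_, ?_⟩
    · intro i hi
      have hia : i ≠ a := by rintro rfl; exact hi (Finset.mem_insert_self _ S)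
      have hiS : i ∉ S := fun h => hi (Finset.mem_insert_of_mem h)
      dsimp only
      rw [Function.update_of_ne hia, Function.update_of_ne hia]
      exact h1 i hiS
    · intro i hi
      dsimp only
      rcases Finset.mem_insert.1 hi with hia | hiS
      · subst hia; simp only [Function.update_self]
        exact fun h => hqne ⟨h.1, h.2⟩
      · have hia : i ≠ a := by rintro rfl; exact ha hiS
        rw [Function.update_of_ne hia, Function.update_of_ne hia]
        exact h2 i hiS
    · dsimp only
      rw [Finset.sum_insert ha, Function.update_self, sum_update_of_not_mem ha]
      exact zmod2_self_add _
    · dsimp only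
      rw [Finset.sum_insert ha, Function.update_self, sum_update_of_not_mem ha]
      exact zmod2_self_add _
  · intro p hp
    obtain ⟨⟨h1, h2⟩, hs1, hs2⟩ := mem_Bset.1 hp
    rw [Finset.sum_insert ha] at hs1 hs2
    have e1 : ∑ i ∈ S, p.1 i = p.1 a := zmod2_add_cancel hs1
    have e2 : ∑ i ∈ S, p.2 i = p.2 a := zmod2_add_cancel hs2
    dsimp only
    rw [sum_update_of_not_mem ha, sum_update_of_not_mem ha]
    simp only [Function.update_idem, e1, e2, Function.update_eq_self]
  · intro q hq
    rw [Finset.mem_filter] at hq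
    obtain ⟨hqC, -⟩ := hq
    obtain ⟨h1, -⟩ := mem_Cset.1 hqC
    have hq1 : q.1 a = 0 := (h1 a ha).1
    have hq2 : q.2 a = 0 := (h1 a ha).2
    have e1 : Function.update q.1 a (0 : ZMod 2) = q.1 := by
      conv_rhs => rw [← Function.update_eq_self a q.1]
      rw [hq1]
    have e2 : Function.update q.2 a (0 : ZMod 2) = q.2 := by
      conv_rhs => rw [← Function.update_eq_self a q.2]
      rw [hq2]
    dsimp only
    simp only [Function.update_idem, e1, e2]

lemma card_Bset (S : Finset (Fin n)) :
    4 * ((Bset n S).card : ℤ) = 3 ^ S.card + 3 * (-1 : ℤ) ^ S.card := by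
  induction S using Finset.induction_on with
  | empty =>
    have h : Bset n ∅ = {(0, 0)} := by
      rw [Bset, Cset_empty]
      ext p
      simp
    rw [h]
    simp
  | @insert a S ha IH =>
    have h := card_Bset_insert (n := n) ha
    rw [card_Cset] at h
    have hz : ((Bset n (insert a S)).card : ℤ) + (Bset n S).card = 3 ^ S.card := by
      exact_mod_cast h
    rw [Finset.card_insert_of_notMem ha, pow_succ, pow_succ]
    linarith


lemma sum_eq_zero_of_even {u : Fin n → ZMod 2} {S : Finset (Fin n)}
    (hsupp : supp u ⊆ S) (he : Even (hammingNorm u)) : ∑ i ∈ S, u i = 0 := by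
  have h1 : ∑ i ∈ S, u i = ∑ i ∈ supp u, u i := by
    refine (Finset.sum_subset hsupp ?_).symm
    intro i _ hi
    by_contra h
    exact hi (mem_supp.2 h)
  have h2 : ∑ i ∈ supp u, u i = ∑ _i ∈ supp u, (1 : ZMod 2) :=
    Finset.sum_congr rfl fun i hi => zmod2_ne_zero (mem_supp.1 hi)
  rw [h1, h2, Finset.sum_const, card_supp, nsmul_eq_mul, mul_one]
  obtain ⟨k, hk⟩ := he
  rw [hk]
  push_cast
  exact zmod2_self_add _

section SymRep

variable {α β : Type*} [LinearOrder β]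

def pairup (e : α ↪ β) (u v : α) : α × α := if e u ≤ e v then (u, v) else (v, u)

lemma pairup_comm (e : α ↪ β) (u v : α) : pairup e u v = pairup e v u := by
  unfold pairup
  rcases lt_trichotomy (e u) (e v) with h | h | h
  · rw [if_pos h.le, if_neg (not_le.2 h)]
  · have : u = v := e.injective h
    subst this; rfl
  · rw [if_neg (not_le.2 h), if_pos h.le]

def symRep (e : α ↪ β) : Sym2 α → α × α := Sym2.lift ⟨pairup e, pairup_comm e⟩

lemma symRep_mk (e : α ↪ β) (u v : α) : symRep e s(u, v) = pairup e u v :=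
  Sym2.lift_mk _ _ _

lemma mk_symRep (e : α ↪ β) (p : Sym2 α) : Sym2.mk (symRep e p).1 (symRep e p).2 = p := by
  induction p using Sym2.ind with
  | _ u v =>
    rw [symRep_mk]
    unfold pairup
    split
    · rfl
    · exact Sym2.eq_swap

lemma pairup_lt (e : α ↪ β) {u v : α} (h : u ≠ v) :
    e (pairup e u v).1 < e (pairup e u v).2 := by
  unfold pairup
  by_cases h' : e u ≤ e v
  · rw [if_pos h']
    exact lt_of_le_of_ne h' fun c => h (e.injective c)
  · rw [if_neg h']
    exact not_le.1 h'

lemma pairup_mem_or (e : α ↪ β) (u v : α) :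
    pairup e u v = (u, v) ∨ pairup e u v = (v, u) := by
  unfold pairup
  split
  · exact Or.inl rfl
  · exact Or.inr rfl

end SymRep

end CountPairsAux

open CountPairsAux Finset in
/-- Fix a vector `w ∈ F_2^n` of Hamming weight `t ≥ 1`.  The number of
unordered pairs `{u, v}` of distinct nonzero vectors, each of even Hamming weight, whose
bitwise OR equals `w` (i.e. `supp(u) ∪ supp(v) = supp(w)`) is at most `(3^t + 1)/8`,
stated as: 8 times the number of such pairs is at most `3^t + 1`. -/
theorem count_pairs_with_given_or (n t : ℕ) (w : Fin n → ZMod 2)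
    (hw : hammingNorm w = t) (ht : 1 ≤ t) :
    8 * Set.ncard {p : Sym2 (Fin n → ZMod 2) |
        ∃ u v : Fin n → ZMod 2, p = s(u, v) ∧ u ≠ v ∧ u ≠ 0 ∧ v ≠ 0 ∧
          Even (hammingNorm u) ∧ Even (hammingNorm v) ∧
          supp u ∪ supp v = supp w} ≤ 3 ^ t + 1 := by
  classical
  set P : Finset (Sym2 (Fin n → ZMod 2)) :=
    Finset.univ.filter (fun p : Sym2 (Fin n → ZMod 2) =>
      ∃ u v : Fin n → ZMod 2, p = s(u, v) ∧ u ≠ v ∧ u ≠ 0 ∧ v ≠ 0 ∧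
        Even (hammingNorm u) ∧ Even (hammingNorm v) ∧
        supp u ∪ supp v = supp w) with hPdef
  have hset : {p : Sym2 (Fin n → ZMod 2) |
      ∃ u v : Fin n → ZMod 2, p = s(u, v) ∧ u ≠ v ∧ u ≠ 0 ∧ v ≠ 0 ∧
        Even (hammingNorm u) ∧ Even (hammingNorm v) ∧
        supp u ∪ supp v = supp w} = ↑P := by
    ext p
    simp [hPdef]
  rw [hset, Set.ncard_coe_finset]
  set O : Finset ((Fin n → ZMod 2) × (Fin n → ZMod 2)) :=
    Finset.univ.filter (fun p => p.1 ≠ p.2 ∧ p.1 ≠ 0 ∧ p.2 ≠ 0 ∧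
      Even (hammingNorm p.1) ∧ Even (hammingNorm p.2) ∧
      supp p.1 ∪ supp p.2 = supp w) with hOdef
  have mem_O : ∀ p : (Fin n → ZMod 2) × (Fin n → ZMod 2),
      p ∈ O ↔ (p.1 ≠ p.2 ∧ p.1 ≠ 0 ∧ p.2 ≠ 0 ∧
        Even (hammingNorm p.1) ∧ Even (hammingNorm p.2) ∧
        supp p.1 ∪ supp p.2 = supp w) := by
    intro p
    rw [hOdef, Finset.mem_filter]
    simp
  have hcardS : (supp w).card = t := by rw [card_supp, hw]
  have hw0 : w ≠ 0 := by
    intro h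
    rw [h] at hw
    simp [hammingNorm] at hw
    omega
  have hsubOB : O ⊆ Bset n (supp w) := by
    intro p hp
    rw [mem_O] at hp
    obtain ⟨hne, h10, h20, he1, he2, hun⟩ := hp
    have hs1 : supp p.1 ⊆ supp w := hun ▸ Finset.subset_union_left
    have hs2 : supp p.2 ⊆ supp w := hun ▸ Finset.subset_union_right
    rw [mem_Bset]
    refine ⟨⟨?_, ?_⟩, sum_eq_zero_of_even hs1 he1, sum_eq_zero_of_even hs2 he2⟩
    · intro i hi
      constructor
      · by_contra h; exact hi (hs1 (mem_supp.2 h))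
      · by_contra h; exact hi (hs2 (mem_supp.2 h))
    · intro i hi
      rw [← hun] at hi
      rcases Finset.mem_union.1 hi with h | h
      · exact fun c => (mem_supp.1 h) c.1
      · exact fun c => (mem_supp.1 h) c.2
  have hZ : 4 * (O.card : ℤ) ≤ 3 ^ t + 1 := by
    have hB := card_Bset (n := n) (supp w)
    rw [hcardS] at hB
    rcases Nat.even_or_odd t with hev | hod
    · -- even case : the three degenerate pairs lie in Bset but not in O
      have hwe : Even (hammingNorm w) := by rw [hw]; exact hev
      have hsw : ∑ i ∈ supp w, w i = 0 := sum_eq_zero_of_even subset_rfl hwe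
      have hA : ((w, (0 : Fin n → ZMod 2))) ∈ Bset n (supp w) := by
        rw [mem_Bset]
        refine ⟨⟨?_, ?_⟩, ?_, ?_⟩
        · intro i hi
          refine ⟨?_, rfl⟩
          by_contra h; exact hi (mem_supp.2 h)
        · intro i hi c
          exact (mem_supp.1 hi) c.1
        · exact hsw
        · simp
      have hBm : (((0 : Fin n → ZMod 2), w)) ∈ Bset n (supp w) := by
        rw [mem_Bset]
        refine ⟨⟨?_, ?_⟩, ?_, ?_⟩
        · intro i hi
          refine ⟨rfl, ?_⟩
          by_contra h; exact hi (mem_supp.2 h)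
        · intro i hi c
          exact (mem_supp.1 hi) c.2
        · simp
        · exact hsw
      have hC : ((w, w)) ∈ Bset n (supp w) := by
        rw [mem_Bset]
        refine ⟨⟨?_, ?_⟩, hsw, hsw⟩
        · intro i hi
          have : w i = 0 := by by_contra h; exact hi (mem_supp.2 h)
          exact ⟨this, this⟩
        · intro i hi c
          exact (mem_supp.1 hi) c.1
      have habc : ({(w, 0), (0, w), (w, w)} :
          Finset ((Fin n → ZMod 2) × (Fin n → ZMod 2))) ⊆ Bset n (supp w) := by
        intro p hp
        simp only [Finset.mem_insert, Finset.mem_singleton] at hp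
        rcases hp with rfl | rfl | rfl
        · exact hA
        · exact hBm
        · exact hC
      have hdisj : Disjoint O ({(w, 0), (0, w), (w, w)} :
          Finset ((Fin n → ZMod 2) × (Fin n → ZMod 2))) := by
        rw [Finset.disjoint_left]
        intro p hpO hp3
        rw [mem_O] at hpO
        obtain ⟨hne, h10, h20, -⟩ := hpO
        simp only [Finset.mem_insert, Finset.mem_singleton] at hp3
        rcases hp3 with rfl | rfl | rfl
        · exact h20 rfl
        · exact h10 rfl
        · exact hne rfl
      have hcard3 : ({(w, 0), (0, w), (w, w)} :
          Finset ((Fin n → ZMod 2) × (Fin n → ZMod 2))).card = 3 := by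
        have h1 : ((w, (0 : Fin n → ZMod 2))) ∉ ({(0, w), (w, w)} :
            Finset ((Fin n → ZMod 2) × (Fin n → ZMod 2))) := by
          simp only [Finset.mem_insert, Finset.mem_singleton, Prod.mk.injEq]
          rintro (⟨h, -⟩ | ⟨-, h⟩)
          · exact hw0 h
          · exact hw0 h.symm
        have h2 : (((0 : Fin n → ZMod 2), w)) ∉ ({(w, w)} :
            Finset ((Fin n → ZMod 2) × (Fin n → ZMod 2))) := by
          simp only [Finset.mem_singleton, Prod.mk.injEq]
          rintro ⟨h, -⟩
          exact hw0 h.symm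
        rw [Finset.card_insert_of_notMem h1, Finset.card_insert_of_notMem h2,
          Finset.card_singleton]
      have hunion : O.card + 3 ≤ (Bset n (supp w)).card := by
        rw [← hcard3, ← Finset.card_union_of_disjoint hdisj]
        exact Finset.card_le_card (Finset.union_subset hsubOB habc)
      have hpow : ((-1 : ℤ)) ^ t = 1 := Even.neg_one_pow hev
      rw [hpow] at hB
      have hz : (O.card : ℤ) + 3 ≤ ((Bset n (supp w)).card : ℤ) := by
        exact_mod_cast hunion
      linarith
    · have hle := Finset.card_le_card hsubOB
      have hpow : ((-1 : ℤ)) ^ t = -1 := Odd.neg_one_pow hod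
      rw [hpow] at hB
      have hz : (O.card : ℤ) ≤ ((Bset n (supp w)).card : ℤ) := by exact_mod_cast hle
      linarith
  -- relate unordered pairs to ordered pairs
  set e : (Fin n → ZMod 2) ↪ Fin (Fintype.card (Fin n → ZMod 2)) :=
    (Fintype.equivFin _).toEmbedding with hedef
  set O1 := O.filter (fun p => e p.1 < e p.2) with hO1
  have hOswap : ∀ p ∈ O, p.swap ∈ O := by
    intro p hp
    rw [mem_O] at hp
    obtain ⟨hne, h10, h20, he1, he2, hun⟩ := hp
    rw [mem_O]
    exact ⟨fun c => hne c.symm, h20, h10, he2, he1,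
      by rw [Finset.union_comm]; exact hun⟩
  have hPO1 : P.card ≤ O1.card := by
    apply Finset.card_le_card_of_injOn (symRep e)
    · intro p hp
      rw [hPdef, Finset.mem_coe, Finset.mem_filter] at hp
      obtain ⟨-, u, v, rfl, hne, h10, h20, he1, he2, hun⟩ := hp
      have huvO : ((u, v) : (Fin n → ZMod 2) × (Fin n → ZMod 2)) ∈ O := by
        rw [mem_O]; exact ⟨hne, h10, h20, he1, he2, hun⟩
      rw [hO1, Finset.mem_coe, Finset.mem_filter]
      constructor
      · rw [symRep_mk]
        rcases pairup_mem_or e u v with h | h <;> rw [h]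
        · exact huvO
        · exact hOswap _ huvO
      · rw [symRep_mk]
        exact pairup_lt e hne
    · intro a _ b _ h
      rw [← mk_symRep e a, ← mk_symRep e b, h]
  have hO2 : O1.card + (O.filter (fun p => ¬ e p.1 < e p.2)).card = O.card := by
    rw [hO1]
    exact Finset.card_filter_add_card_filter_not _
  have hOO : O1.card = (O.filter (fun p => ¬ e p.1 < e p.2)).card := by
    refine Finset.card_bij' (fun p _ => p.swap) (fun p _ => p.swap) ?_ ?_ ?_ ?_
    · intro p hp
      rw [hO1, Finset.mem_filter] at hp
      rw [Finset.mem_filter]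
      exact ⟨hOswap _ hp.1, lt_asymm hp.2⟩
    · intro p hp
      rw [Finset.mem_filter] at hp
      obtain ⟨hpO, hlt⟩ := hp
      rw [hO1, Finset.mem_filter]
      refine ⟨hOswap _ hpO, ?_⟩
      have hne : p.1 ≠ p.2 := ((mem_O p).1 hpO).1
      exact lt_of_le_of_ne (not_lt.1 hlt) fun c => hne (e.injective c.symm)
    · intro p _
      exact Prod.swap_swap p
    · intro p _
      exact Prod.swap_swap p
  have hZn : 4 * O.card ≤ 3 ^ t + 1 := by exact_mod_cast hZ
  obtain ⟨M, hM⟩ : ∃ M, 3 ^ t = M := ⟨_, rfl⟩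
  rw [hM] at hZn ⊢
  omega
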